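/- Let F be the cofinite × cofinite filter on ω × ω: A ∈ F iff for all but finitely many n, for all but finitely many m, (n,m) ∈ A; and let F* = {(ω×ω) \ A : A ∈ F}. Suppose A and B are disjoint sets in Σ⁰₃(2^ω). Then there exists a continuous function h : 2^ω → 2^{ω×ω} such that h(A) ⊆ F and h(B) ⊆ F* (identifying subsets of ω × ω with their characteristic functions in 2^{ω×ω}). -/
import Mathlib


/-- The Borel hierarchy: `SigmaZero α A` means `A` is in the Borel class Σ⁰_α.
Σ⁰₁ is the collection of open sets; for α > 1, Σ⁰_α consists of countable unions
⋃ k, A k where each A k is the complement of a Σ⁰_{β k} set for some 1 ≤ β k < α. -/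
inductive SigmaZero {X : Type*} [TopologicalSpace X] : Ordinal.{0} → Set X → Prop
  | isOpen {A : Set X} (h : IsOpen A) : SigmaZero 1 A
  | iUnion {α : Ordinal.{0}} (hα : 1 < α) (A : ℕ → Set X) (β : ℕ → Ordinal.{0})
      (hβ1 : ∀ k, 1 ≤ β k) (hβ : ∀ k, β k < α)
      (h : ∀ k, SigmaZero (β k) (A k)ᶜ) : SigmaZero α (⋃ k, A k)

/-- `A` is Π⁰_α iff its complement is Σ⁰_α. -/
def PiZero {X : Type*} [TopologicalSpace X] (α : Ordinal.{0}) (A : Set X) : Prop :=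
  SigmaZero α Aᶜ

/-- `A` is Δ⁰_α iff it is both Σ⁰_α and Π⁰_α. -/
def DeltaZero {X : Type*} [TopologicalSpace X] (α : Ordinal.{0}) (A : Set X) : Prop :=
  SigmaZero α A ∧ PiZero α A

/-- The cofinite × cofinite filter on ω × ω, as a set of characteristic functions in the
Cantor space `ℕ × ℕ → Bool`: `A ∈ cofXcof` iff for all but finitely many `n`,
for all but finitely many `m`, `(n, m) ∈ A`. -/
def cofXcof : Set (ℕ × ℕ → Bool) :=
  {A | ∀ᶠ n in Filter.cofinite, ∀ᶠ m in Filter.cofinite, A (n, m) = true}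

/-- The dual ideal of the cofinite × cofinite filter: complements of its members. -/
def cofXcofStar : Set (ℕ × ℕ → Bool) :=
  {A | (fun p => ! A p) ∈ cofXcof}


open Classical

lemma cyl_isOpen (x : ℕ → Bool) (m : ℕ) : IsOpen {y : ℕ → Bool | ∀ i < m, y i = x i} := by
  have heq : {y : ℕ → Bool | ∀ i < m, y i = x i}
      = ⋂ i ∈ Finset.range m, (fun y : ℕ → Bool => y i) ⁻¹' {x i} := by
    ext y; simp [Set.mem_iInter]
  rw [heq]
  refine Set.Finite.isOpen_biInter (Finset.range m).finite_toSet fun i _ => ?_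
  exact IsOpen.preimage (continuous_apply i) (isOpen_discrete ({x i} : Set Bool))

/-- Every point of an open set in Cantor space has a basic cylinder neighborhood inside it. -/
lemma mem_open_cyl {U : Set (ℕ → Bool)} (hU : IsOpen U) {x : ℕ → Bool} (hx : x ∈ U) :
    ∃ M : ℕ, ∀ y : ℕ → Bool, (∀ i < M, y i = x i) → y ∈ U := by
  rw [isOpen_pi_iff] at hU
  obtain ⟨I, u, h1, h2⟩ := hU x hx
  refine ⟨(I.sup id) + 1, fun y hy => h2 ?_⟩
  intro i hi
  have hyi : y i = x i := hy i (Nat.lt_succ_of_le (Finset.le_sup (f := id) hi))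
  rw [hyi]
  exact (h1 i hi).2

/-- Closed sets in Cantor space are countable intersections of opens. -/
lemma closed_eq_iInter {C : Set (ℕ → Bool)} (hC : IsClosed C) :
    ∃ V : ℕ → Set (ℕ → Bool), (∀ m, IsOpen (V m)) ∧ C = ⋂ m, V m := by
  refine ⟨fun m => ⋃ z ∈ C, {y : ℕ → Bool | ∀ i < m, y i = z i}, fun m => ?_, ?_⟩
  · exact isOpen_biUnion fun z _ => cyl_isOpen z m
  · apply Set.Subset.antisymm
    · intro x hx
      refine Set.mem_iInter.mpr fun m => Set.mem_iUnion₂.mpr ⟨x, hx, fun i _ => rfl⟩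
    · intro x hx
      rw [Set.mem_iInter] at hx
      have hz : ∀ m : ℕ, ∃ z, z ∈ C ∧ ∀ i < m, x i = z i := by
        intro m
        obtain ⟨z, hzC, hzx⟩ := Set.mem_iUnion₂.mp (hx m)
        exact ⟨z, hzC, hzx⟩
      choose z hzC hzx using hz
      have htend : Filter.Tendsto z Filter.atTop (nhds x) := by
        rw [tendsto_pi_nhds]
        intro i
        refine Filter.Tendsto.congr' ?_ tendsto_const_nhds
        filter_upwards [Filter.eventually_ge_atTop (i+1)] with m hm
        exact hzx m i (Nat.lt_of_lt_of_le (Nat.lt_succ_self i) hm)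
      exact hC.mem_of_tendsto htend (Filter.Eventually.of_forall hzC)

lemma sigmaZero_cases {X : Type*} [TopologicalSpace X] {α : Ordinal.{0}} {A : Set X}
    (h : SigmaZero α A) :
    (α = 1 ∧ IsOpen A) ∨ (1 < α ∧ ∃ (B : ℕ → Set X) (β : ℕ → Ordinal.{0}),
      (∀ k, 1 ≤ β k) ∧ (∀ k, β k < α) ∧ (∀ k, SigmaZero (β k) (B k)ᶜ) ∧ A = ⋃ k, B k) := by
  cases h with
  | isOpen h => exact Or.inl ⟨rfl, h⟩
  | iUnion hα B β hβ1 hβ h => exact Or.inr ⟨hα, B, β, hβ1, hβ, h, rfl⟩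

lemma sigmaZero_one_isOpen {X : Type*} [TopologicalSpace X] {A : Set X}
    (h : SigmaZero 1 A) : IsOpen A := by
  rcases sigmaZero_cases h with ⟨_, hop⟩ | ⟨hlt, _⟩
  · exact hop
  · exact absurd hlt (lt_irrefl 1)

lemma ord_le_one {β : Ordinal.{0}} (h1 : 1 ≤ β) (h2 : β < 2) : β = 1 := by
  have h2' : (2:Ordinal) = Order.succ 1 := by rw [← Ordinal.add_one_eq_succ]; norm_num
  rw [h2', Order.lt_succ_iff] at h2
  exact le_antisymm h2 h1

lemma ord_lt_three {β : Ordinal.{0}} (h1 : 1 ≤ β) (h2 : β < 3) : β = 1 ∨ β = 2 := by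
  have h3 : (3:Ordinal) = Order.succ 2 := by rw [← Ordinal.add_one_eq_succ]; norm_num
  have hb2 : β ≤ 2 := by rwa [h3, Order.lt_succ_iff] at h2
  rcases lt_or_eq_of_le hb2 with h | h
  · exact Or.inl (ord_le_one h1 h)
  · exact Or.inr h

/-- A Π⁰₂ set is a countable intersection of opens. -/
lemma sigmaZero_two_compl {X : Type*} [TopologicalSpace X] {A : Set X}
    (h : SigmaZero 2 A) : ∃ V : ℕ → Set X, (∀ m, IsOpen (V m)) ∧ Aᶜ = ⋂ m, V m := by
  rcases sigmaZero_cases h with ⟨h21, _⟩ | ⟨_, B, β, hβ1, hβ, hh, hAeq⟩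
  · exact absurd h21 (by norm_num)
  · refine ⟨fun k => (B k)ᶜ, fun k => ?_, by rw [hAeq, Set.compl_iUnion]⟩
    have hb : β k = 1 := ord_le_one (hβ1 k) (hβ k)
    have hk := hh k
    rw [hb] at hk
    exact sigmaZero_one_isOpen hk

/-- A Σ⁰₃ subset of Cantor space is a countable union of countable intersections of opens. -/
lemma sigmaZero_three_rep {A : Set (ℕ → Bool)} (h : SigmaZero 3 A) :
    ∃ U : ℕ → ℕ → Set (ℕ → Bool), (∀ n m, IsOpen (U n m)) ∧ A = ⋃ n, ⋂ m, U n m := by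
  rcases sigmaZero_cases h with ⟨h31, _⟩ | ⟨_, B, β, hβ1, hβ, hh, hAeq⟩
  · exact absurd h31 (by norm_num)
  · have hrep : ∀ n, ∃ V : ℕ → Set (ℕ → Bool), (∀ m, IsOpen (V m)) ∧ B n = ⋂ m, V m := by
      intro n
      have hn := hh n
      rcases ord_lt_three (hβ1 n) (hβ n) with h1 | h2
      · rw [h1] at hn
        have hcl : IsClosed (B n) := ⟨sigmaZero_one_isOpen hn⟩
        exact closed_eq_iInter hcl
      · rw [h2] at hn
        obtain ⟨V, hV, hVeq⟩ := sigmaZero_two_compl hn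
        exact ⟨V, hV, by rw [← compl_compl (B n), hVeq]⟩
    choose V hVopen hVeq using hrep
    exact ⟨V, fun n m => hVopen n m, by rw [hAeq]; simp only [hVeq]⟩

/-- The monotonized row sets: `rowSet U n m = ⋃_{j ≤ n} ⋂_{i ≤ m} U j i`. -/
def rowSet (U : ℕ → ℕ → Set (ℕ → Bool)) (n m : ℕ) : Set (ℕ → Bool) :=
  ⋃ j ∈ Finset.range (n+1), ⋂ i ∈ Finset.range (m+1), U j i

lemma rowSet_isOpen {U : ℕ → ℕ → Set (ℕ → Bool)} (hU : ∀ n m, IsOpen (U n m)) (n m : ℕ) :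
    IsOpen (rowSet U n m) :=
  isOpen_biUnion fun j _ =>
    Set.Finite.isOpen_biInter (Finset.range (m+1)).finite_toSet fun i _ => hU j i

lemma rowSet_anti (U : ℕ → ℕ → Set (ℕ → Bool)) (n : ℕ) {k l : ℕ} (hkl : k ≤ l) :
    rowSet U n l ⊆ rowSet U n k := by
  intro x hx
  obtain ⟨j, hj1, hj2⟩ := Set.mem_iUnion₂.mp hx
  refine Set.mem_iUnion₂.mpr ⟨j, hj1, Set.mem_iInter₂.mpr fun i hi => ?_⟩
  rw [Finset.mem_range] at hi
  exact Set.mem_iInter₂.mp hj2 i (Finset.mem_range.mpr (by omega))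

lemma iInter_rowSet (U : ℕ → ℕ → Set (ℕ → Bool)) (n : ℕ) :
    (⋂ m, rowSet U n m) = ⋃ j ∈ Finset.range (n+1), ⋂ i, U j i := by
  unfold rowSet
  apply Set.Subset.antisymm
  · intro x hx
    rw [Set.mem_iInter] at hx
    have hj : ∀ m : ℕ, ∃ j : Fin (n+1), ∀ i, i ≤ m → x ∈ U j i := by
      intro m
      obtain ⟨j, hj1, hj2⟩ := Set.mem_iUnion₂.mp (hx m)
      rw [Finset.mem_range] at hj1
      refine ⟨⟨j, hj1⟩, fun i hi => ?_⟩
      exact Set.mem_iInter₂.mp hj2 i (Finset.mem_range.mpr (by omega))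
    choose f hf using hj
    obtain ⟨j, hjinf⟩ := Finite.exists_infinite_fiber f
    rw [Set.infinite_coe_iff] at hjinf
    refine Set.mem_iUnion₂.mpr ⟨j.1, Finset.mem_range.mpr j.2, Set.mem_iInter.mpr fun i => ?_⟩
    obtain ⟨m, hme, hmlt⟩ := hjinf.exists_gt i
    rw [Set.mem_preimage, Set.mem_singleton_iff] at hme
    have hmi := hf m i (le_of_lt hmlt)
    rwa [hme] at hmi
  · intro x hx
    rw [Set.mem_iInter]
    intro m
    obtain ⟨j, hj1, hj2⟩ := Set.mem_iUnion₂.mp hx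
    exact Set.mem_iUnion₂.mpr ⟨j, hj1, Set.mem_iInter₂.mpr fun i _ => Set.mem_iInter.mp hj2 i⟩

/-- The score of a finite string against a sequence of sets: the number of `k < m`
such that the cylinder determined by the first `m` bits is contained in `U k`. -/
noncomputable def scoreFn (U : ℕ → Set (ℕ → Bool)) (m : ℕ) (σ : Fin m → Bool) : ℕ :=
  ((Finset.range m).filter fun k =>
    ∀ y : ℕ → Bool, (∀ i : Fin m, y i = σ i) → y ∈ U k).card

lemma scoreFn_ge {U : ℕ → Set (ℕ → Bool)} (hU : ∀ k, IsOpen (U k)) {x : ℕ → Bool}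
    (hx : ∀ k, x ∈ U k) (K : ℕ) :
    ∃ M, ∀ m, M ≤ m → K ≤ scoreFn U m (fun i => x i) := by
  choose M hM using fun k => mem_open_cyl (hU k) (hx k)
  refine ⟨max K ((Finset.range K).sup M), fun m hm => ?_⟩
  have hsub : Finset.range K ⊆ (Finset.range m).filter fun k =>
      ∀ y : ℕ → Bool, (∀ i : Fin m, y i = x i) → y ∈ U k := by
    intro k hk
    rw [Finset.mem_range] at hk
    rw [Finset.mem_filter, Finset.mem_range]
    refine ⟨lt_of_lt_of_le hk (le_trans (le_max_left _ _) hm),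
      fun y hy => hM k y fun i hi => ?_⟩
    have hiM : i < m := by
      have h1 : M k ≤ (Finset.range K).sup M := Finset.le_sup (Finset.mem_range.mpr hk)
      have h2 : (Finset.range K).sup M ≤ m := le_trans (le_max_right _ _) hm
      omega
    exact hy ⟨i, hiM⟩
  calc K = (Finset.range K).card := (Finset.card_range K).symm
    _ ≤ _ := Finset.card_le_card hsub

lemma scoreFn_le {U : ℕ → Set (ℕ → Bool)} (hanti : ∀ k l : ℕ, k ≤ l → U l ⊆ U k)
    {x : ℕ → Bool} {k₀ : ℕ} (hx : x ∉ U k₀) (m : ℕ) :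
    scoreFn U m (fun i => x i) ≤ k₀ := by
  have hsub : ((Finset.range m).filter fun k =>
      ∀ y : ℕ → Bool, (∀ i : Fin m, y i = x i) → y ∈ U k) ⊆ Finset.range k₀ := by
    intro k hk
    rw [Finset.mem_filter] at hk
    rw [Finset.mem_range]
    by_contra hcon
    push_neg at hcon
    exact hx (hanti k₀ k hcon (hk.2 x (fun _ => rfl)))
  calc scoreFn U m (fun i => x i) ≤ (Finset.range k₀).card := Finset.card_le_card hsub
    _ = k₀ := Finset.card_range k₀

theorem stmt10 (A B : Set (ℕ → Bool)) (hA : SigmaZero 3 A) (hB : SigmaZero 3 B)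
    (hdisj : A ∩ B = ∅) :
    ∃ h : (ℕ → Bool) → (ℕ × ℕ → Bool), Continuous h ∧
      h '' A ⊆ cofXcof ∧ h '' B ⊆ cofXcofStar := by
  obtain ⟨U, hUopen, hUeq⟩ := sigmaZero_three_rep hA
  obtain ⟨V, hVopen, hVeq⟩ := sigmaZero_three_rep hB
  have hPA : ∀ n, (⋂ m, rowSet U n m) ⊆ A := by
    intro n
    rw [iInter_rowSet, hUeq]
    exact Set.iUnion₂_subset fun j _ => Set.subset_iUnion (fun j => ⋂ i, U j i) j
  have hQB : ∀ n, (⋂ m, rowSet V n m) ⊆ B := by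
    intro n
    rw [iInter_rowSet, hVeq]
    exact Set.iUnion₂_subset fun j _ => Set.subset_iUnion (fun j => ⋂ i, V j i) j
  have hAtail : ∀ x ∈ A, ∃ n₀, ∀ n, n₀ ≤ n → x ∈ ⋂ m, rowSet U n m := by
    intro x hx
    rw [hUeq] at hx
    obtain ⟨j, hj⟩ := Set.mem_iUnion.mp hx
    refine ⟨j, fun n hn => ?_⟩
    rw [iInter_rowSet]
    exact Set.mem_biUnion (Finset.mem_range.mpr (by omega)) hj
  have hBtail : ∀ x ∈ B, ∃ n₀, ∀ n, n₀ ≤ n → x ∈ ⋂ m, rowSet V n m := by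
    intro x hx
    rw [hVeq] at hx
    obtain ⟨j, hj⟩ := Set.mem_iUnion.mp hx
    refine ⟨j, fun n hn => ?_⟩
    rw [iInter_rowSet]
    exact Set.mem_biUnion (Finset.mem_range.mpr (by omega)) hj
  refine ⟨fun x p => decide (scoreFn (rowSet V p.1) p.2 (fun i => x i) <
      scoreFn (rowSet U p.1) p.2 (fun i => x i)), ?_, ?_, ?_⟩
  · -- continuity
    apply continuous_pi
    intro p
    have hres : Continuous fun x : ℕ → Bool => (fun i : Fin p.2 => x i) :=
      continuous_pi fun i => continuous_apply i.1
    exact (continuous_of_discreteTopology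
      (f := fun σ : Fin p.2 → Bool => decide (scoreFn (rowSet V p.1) p.2 σ <
        scoreFn (rowSet U p.1) p.2 σ))).comp hres
  · -- image of A in cofXcof
    rintro _ ⟨x, hx, rfl⟩
    simp only [cofXcof, Set.mem_setOf_eq, Nat.cofinite_eq_atTop, Filter.eventually_atTop]
    obtain ⟨n₀, hn₀⟩ := hAtail x hx
    refine ⟨n₀, fun n hn => ?_⟩
    have hxP : x ∈ ⋂ m, rowSet U n m := hn₀ n hn
    have hxB : x ∉ B := fun hxB =>
      Set.eq_empty_iff_forall_notMem.mp hdisj x ⟨hPA n hxP, hxB⟩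
    have hxQ : x ∉ ⋂ m, rowSet V n m := fun hq => hxB (hQB n hq)
    rw [Set.mem_iInter] at hxQ
    push_neg at hxQ
    obtain ⟨k₀, hk₀⟩ := hxQ
    have hle : ∀ m, scoreFn (rowSet V n) m (fun i => x i) ≤ k₀ :=
      scoreFn_le (fun k l h => rowSet_anti V n h) hk₀
    rw [Set.mem_iInter] at hxP
    obtain ⟨M, hM⟩ := scoreFn_ge (fun m => rowSet_isOpen hUopen n m) hxP (k₀ + 1)
    refine ⟨M, fun m hm => ?_⟩
    exact decide_eq_true (lt_of_le_of_lt (hle m) (hM m hm))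
  · -- image of B in cofXcofStar
    rintro _ ⟨x, hx, rfl⟩
    simp only [cofXcofStar, cofXcof, Set.mem_setOf_eq, Nat.cofinite_eq_atTop,
      Filter.eventually_atTop]
    obtain ⟨n₀, hn₀⟩ := hBtail x hx
    refine ⟨n₀, fun n hn => ?_⟩
    have hxQ : x ∈ ⋂ m, rowSet V n m := hn₀ n hn
    have hxA : x ∉ A := fun hxA =>
      Set.eq_empty_iff_forall_notMem.mp hdisj x ⟨hxA, hQB n hxQ⟩
    have hxP : x ∉ ⋂ m, rowSet U n m := fun hp => hxA (hPA n hp)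
    rw [Set.mem_iInter] at hxP
    push_neg at hxP
    obtain ⟨k₀, hk₀⟩ := hxP
    have hle : ∀ m, scoreFn (rowSet U n) m (fun i => x i) ≤ k₀ :=
      scoreFn_le (fun k l h => rowSet_anti U n h) hk₀
    rw [Set.mem_iInter] at hxQ
    obtain ⟨M, hM⟩ := scoreFn_ge (fun m => rowSet_isOpen hVopen n m) hxQ (k₀ + 1)
    refine ⟨M, fun m hm => ?_⟩
    have hnot : ¬ (scoreFn (rowSet V n) m (fun i => x i) <
        scoreFn (rowSet U n) m (fun i => x i)) := by
      have h1 := hle m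
      have h2 := hM m hm
      omega
    simp [hnot]
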